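/- arXiv:2307.05044 — 4 statements merged into one kernel-verified Lean document; each statement's English description precedes it below -/
import Mathlib

section
/- Let a₂ > 0, a₁, a₀ be real numbers with a₀ = μ²(1 − R)Λ and a₁ = W ω β μ + (1 − Φ)Λμ + (1 − R)Λμ, where μ, Λ, W, ω, β > 0 and Φ ∈ (0,1). If R ≤ 1 then the quadratic a₂x² + a₁x + a₀ has no positive real root; if R > 1 it has exactly one positive real root. -/
theorem quadratic_positive_roots (μ Λ W ω β Φ R a₂ a₁ a₀ : ℝ)
    (hμ : 0 < μ) (hΛ : 0 < Λ) (hW : 0 < W) (hω : 0 < ω) (hβ : 0 < β)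
    (hΦ0 : 0 < Φ) (hΦ1 : Φ < 1) (hR : 0 < R)
    (ha₂ : a₂ = (1 - Φ) * Λ)
    (ha₁ : a₁ = W * ω * β * μ + (1 - Φ) * Λ * μ + (1 - R) * Λ * μ)
    (ha₀ : a₀ = μ ^ 2 * (1 - R) * Λ) :
    (R ≤ 1 → ¬ ∃ x : ℝ, 0 < x ∧ a₂ * x ^ 2 + a₁ * x + a₀ = 0) ∧
    (1 < R → ∃! x : ℝ, 0 < x ∧ a₂ * x ^ 2 + a₁ * x + a₀ = 0) := by
  have hΦ' : 0 < 1 - Φ := by linarith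
  have ha2pos : 0 < a₂ := by rw [ha₂]; exact mul_pos hΦ' hΛ
  constructor
  · rintro hR1 ⟨x, hx, hxeq⟩
    have hR' : 0 ≤ 1 - R := by linarith
    have h1 : 0 < a₁ := by
      rw [ha₁]
      have h1a : 0 < W * ω * β * μ := by positivity
      have h1b : 0 < (1 - Φ) * Λ * μ := by positivity
      have h1c : 0 ≤ (1 - R) * Λ * μ := by positivity
      linarith
    have h0 : 0 ≤ a₀ := by rw [ha₀]; positivity
    nlinarith [mul_pos ha2pos (mul_pos hx hx)]
  · intro hR1
    have h0 : a₀ < 0 := by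
      rw [ha₀]
      have : 0 < μ ^ 2 * (R - 1) * Λ := by
        have : (0:ℝ) < R - 1 := by linarith
        positivity
      nlinarith
    have hD : 0 < a₁ ^ 2 - 4 * a₂ * a₀ := by nlinarith [sq_nonneg a₁]
    set s := Real.sqrt (a₁ ^ 2 - 4 * a₂ * a₀) with hs
    have hs2 : s ^ 2 = a₁ ^ 2 - 4 * a₂ * a₀ := Real.sq_sqrt hD.le
    have hsge : 0 ≤ s := Real.sqrt_nonneg _
    have hsgt : a₁ < s := by
      nlinarith [le_abs_self a₁, sq_abs a₁]
    set x := (-a₁ + s) / (2 * a₂) with hxdef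
    have hx : 0 < x := div_pos (by linarith) (by linarith)
    have hxeq : a₂ * x ^ 2 + a₁ * x + a₀ = 0 := by
      have hkey : a₂ * x ^ 2 + a₁ * x + a₀ = (s ^ 2 - (a₁ ^ 2 - 4 * a₂ * a₀)) / (4 * a₂) := by
        rw [hxdef]; field_simp; ring
      rw [hkey, hs2]; simp
    refine ⟨x, ⟨hx, hxeq⟩, ?_⟩
    rintro y ⟨hy, hyeq⟩
    by_contra hne
    have hsum : a₂ * (y + x) = -a₁ := by
      have hdiff : (y - x) * (a₂ * (y + x) + a₁) = 0 := by nlinarith [hyeq, hxeq]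
      rcases mul_eq_zero.mp hdiff with h | h
      · exact absurd (by linarith) hne
      · linarith
    nlinarith [mul_pos ha2pos (mul_pos hy hx)]
end

section
/- Let R^q(α) be as in the quarantine reproduction number with limits R₀ = R^q at α → 0 and R∞ = R^q at α → ∞. If R₀ > 1 and R∞ < 1, then the unique solution α* of R^q(α) = 1 is α* = (R₀ − 1)(ρ + μ)/(1 − R∞), and α* > 0. -/
theorem critical_alpha (β ρ σ τ μ q r D R₀ Rinf : ℝ)
    (hβ : 0 < β) (hρ : 0 < ρ) (hσ : 0 < σ) (hτ : 0 < τ) (hμ : 0 < μ)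
    (hq : 0 < q) (hr : 0 < r) (hD : 0 < D)
    (hR0 : R₀ = β * ρ * (σ + r) / ((ρ + μ) * D))
    (hRinf : Rinf = β * (q + τ) / D)
    (h1 : 1 < R₀) (h2 : Rinf < 1) :
    0 < (R₀ - 1) * (ρ + μ) / (1 - Rinf) ∧
    ∀ α : ℝ, 0 < α →
      (β * (α * q + ρ * σ + α * τ + r * ρ) / ((α + ρ + μ) * D) = 1 ↔
        α = (R₀ - 1) * (ρ + μ) / (1 - Rinf)) := by
  have hρμ : (0:ℝ) < ρ + μ := by linarith
  have hDβ : 0 < D - β * (q + τ) := by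
    have h2' := h2
    rw [hRinf, div_lt_one hD] at h2'
    linarith
  have hE : (R₀ - 1) * (ρ + μ) / (1 - Rinf)
      = (β * ρ * (σ + r) - (ρ + μ) * D) / (D - β * (q + τ)) := by
    rw [hR0, hRinf]
    have hx : β * (q + τ) / D < 1 := by rw [div_lt_one hD]; linarith
    rw [div_eq_div_iff (ne_of_gt (by linarith : (0:ℝ) < 1 - β * (q + τ) / D))
        (ne_of_gt hDβ)]
    field_simp
  refine ⟨by apply div_pos (mul_pos (by linarith) hρμ) (by linarith), ?_⟩
  intro α hα
  have hden : (α + ρ + μ) * D ≠ 0 := by positivity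
  rw [div_eq_one_iff_eq hden, hE]
  constructor
  · intro h
    rw [eq_div_iff (ne_of_gt hDβ)]
    linear_combination -h
  · intro h
    rw [eq_div_iff (ne_of_gt hDβ)] at h
    linear_combination -h
end

section
/- The Jacobian of the transformed single-strain system at the DFE with bifurcation parameter β* = p(q̇r + r̃σ)/(αq + ρσ + ατ + rρ) has zero as an eigenvalue: the vector w = (−b₁/b₅, μb₁/(p b₅), μb₃/b₅, μb₂/b₅, 1) satisfies Jw = 0 for the 5×5 matrix J with rows (−μ, 0, −β*, −β*, 0), (0, −p, β*, β*, 0), (0, ρ, −q, τ, 0), (0, α, σ, −r, 0), (0, 0, γ, φ, −μ). -/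
theorem jacobian_zero_eigenvalue (μ ρ α σ τ γ φ δ p q r b₁ b₂ b₃ b₅ βs : ℝ)
    (hμ : 0 < μ) (hρ : 0 < ρ) (hα : 0 < α) (hσ : 0 < σ) (hτ : 0 < τ)
    (hγ : 0 < γ) (hφ : 0 < φ) (hδ : 0 < δ)
    (hp : p = α + ρ + μ) (hq : q = γ + σ + δ + μ) (hr : r = φ + τ + δ + μ)
    (hb₁ : b₁ = p * ((γ + δ + μ) * r + (φ + δ + μ) * σ))
    (hb₂ : b₂ = α * q + ρ * σ) (hb₃ : b₃ = α * τ + r * ρ)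
    (hb₅ : b₅ = φ * b₂ + γ * b₃)
    (hβs : βs = b₁ / (b₂ + b₃)) :
    Matrix.mulVec
      !![-μ, 0, -βs, -βs, 0;
         0, -p, βs, βs, 0;
         0, ρ, -q, τ, 0;
         0, α, σ, -r, 0;
         0, 0, γ, φ, -μ]
      ![-b₁ / b₅, μ * b₁ / (p * b₅), μ * b₃ / b₅, μ * b₂ / b₅, 1] = 0 := by
  have hpne : p ≠ 0 := by subst hp; positivity
  have hbsum : b₂ + b₃ ≠ 0 := by subst hb₂ hb₃ hq hr; positivity
  have hb5 : b₅ ≠ 0 := by subst hb₅ hb₂ hb₃ hq hr; positivity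
  have key : βs * (b₂ + b₃) = b₁ := by rw [hβs]; field_simp
  have h3 : ρ * b₁ = p * (q * b₃) - p * (τ * b₂) := by
    subst hb₁ hb₂ hb₃ hq hr; ring
  have h4 : α * b₁ = p * (r * b₂) - p * (σ * b₃) := by
    subst hb₁ hb₂ hb₃ hq hr; ring
  funext i
  fin_cases i <;>
    simp [Matrix.mulVec, dotProduct, Fin.sum_univ_five] <;>
    field_simp
  · linear_combination (-μ) * key
  · linear_combination μ * key
  · linear_combination μ * h3
  · linear_combination μ * h4
  · linear_combination (-μ) * hb₅
end

section
/- For the total death proportion Φ = (αδq + δrρ + δρσ + αδτ)/(p(q̇r + r̃σ)), if δ < min{q̇, r̃} and parameters are positive with q = q̇ + σ and r = r̃ + τ, then 0 < Φ < 1. -/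
theorem death_proportion_in_unit_interval (α δ ρ σ τ μ γ φ : ℝ)
    (hα : 0 < α) (hδ : 0 < δ) (hρ : 0 < ρ) (hσ : 0 < σ) (hτ : 0 < τ)
    (hμ : 0 < μ) (hγ : 0 < γ) (hφ : 0 < φ)
    (hδq : δ < min (γ + δ + μ) (φ + δ + μ)) :
    let qd := γ + δ + μ
    let rt := φ + δ + μ
    let q := γ + σ + δ + μ
    let r := φ + τ + δ + μ
    let p := α + ρ + μ
    let Φ := (α * δ * q + δ * r * ρ + δ * ρ * σ + α * δ * τ) / (p * (qd * r + rt * σ))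
    0 < Φ ∧ Φ < 1 := by
  intro qd rt q r p Φ
  have hden : 0 < p * (qd * r + rt * σ) := by
    have : 0 < p := by positivity
    have : 0 < qd * r + rt * σ := by positivity
    positivity
  have hnum : 0 < α * δ * q + δ * r * ρ + δ * ρ * σ + α * δ * τ := by positivity
  constructor
  · exact div_pos hnum hden
  · rw [div_lt_one hden]
    show α * δ * q + δ * r * ρ + δ * ρ * σ + α * δ * τ < p * (qd * r + rt * σ)
    show α * δ * (γ + σ + δ + μ) + δ * (φ + τ + δ + μ) * ρ + δ * ρ * σ + α * δ * τ <
      (α + ρ + μ) * ((γ + δ + μ) * (φ + τ + δ + μ) + (φ + δ + μ) * σ)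
    have key : (α + ρ + μ) * ((γ + δ + μ) * (φ + τ + δ + μ) + (φ + δ + μ) * σ)
        - (α * δ * (γ + σ + δ + μ) + δ * (φ + τ + δ + μ) * ρ + δ * ρ * σ + α * δ * τ)
        = ρ * ((γ + μ) * (φ + τ + δ + μ) + (φ + μ) * σ)
          + μ * ((γ + δ + μ) * (φ + τ + δ + μ) + (φ + δ + μ) * σ)
          + α * (δ * φ + γ * (φ + τ + μ) + μ * (φ + τ + δ + μ) + (φ + μ) * σ) := by ring
    nlinarith [key, mul_pos hρ (by positivity : (0:ℝ) < (γ + μ) * (φ + τ + δ + μ) + (φ + μ) * σ),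
      mul_pos hμ (by positivity : (0:ℝ) < (γ + δ + μ) * (φ + τ + δ + μ) + (φ + δ + μ) * σ),
      mul_pos hα (by positivity : (0:ℝ) < δ * φ + γ * (φ + τ + μ) + μ * (φ + τ + δ + μ) + (φ + μ) * σ)]
end
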